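/- arXiv:2202.05818 — 2 statements merged into one kernel-verified Lean document; each statement's English description precedes it below -/
import Mathlib

section
/- Let R be a complete local Noetherian ring with residue field F, G a profinite group, and ρ : G → GL_n(R) a continuous lift of an absolutely irreducible representation ρ̄ : G → GL_n(F). If a ∈ GL_n(R) satisfies a ρ(g) a⁻¹ = ρ(g) for all g ∈ G, then a is a scalar matrix, i.e. a ∈ R^× (embedded diagonally). -/
open Matrix IsLocalRing

set_option maxHeartbeats 1000000
set_option synthInstance.maxHeartbeats 1000000

/-- Absolute irreducibility of a mod-`p` representation: after extension of scalars to any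
field extension, there is no nontrivial invariant subspace. -/
def AbsolutelyIrreducible {G : Type} [Group G] {F : Type} [Field F] {n : ℕ}
    (ρbar : G →* GL (Fin n) F) : Prop :=
  ∀ (F' : Type) [Field F'] [Algebra F F'],
    ∀ W : Submodule F' (Fin n → F'),
      (∀ g : G, ∀ x ∈ W,
        ((ρbar g : Matrix (Fin n) (Fin n) F).map (algebraMap F F')).mulVec x ∈ W) →
      W = ⊥ ∨ W = ⊤


lemma pi_isSemisimpleModule (A : Type*) [Ring A] (V : Type*) [AddCommGroup V] [Module A V]
    [IsSemisimpleModule A V] (m : ℕ) : IsSemisimpleModule A (Fin m → V) := by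
  classical
  apply isSemisimpleModule_of_isSemisimpleModule_submodule'
    (p := fun i : Fin m => LinearMap.range (LinearMap.single A (fun _ : Fin m => V) i))
  · intro i
    have hinj : Function.Injective (LinearMap.single A (fun _ : Fin m => V) i) := by
      rw [LinearMap.coe_single]; exact Pi.single_injective i
    exact IsSemisimpleModule.congr (LinearEquiv.ofInjective _ hinj).symm
  · exact LinearMap.iSup_range_single A _

lemma burnside_span {K : Type} [Field K] [IsAlgClosed K] {n : ℕ} (hn : n ≠ 0)
    {G : Type} [Group G] (M : G →* Matrix (Fin n) (Fin n) K)
    (hirr : ∀ W : Submodule K (Fin n → K),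
      (∀ g : G, ∀ x ∈ W, (M g).mulVec x ∈ W) → W = ⊥ ∨ W = ⊤) :
    Submodule.span K (Set.range fun g => M g) = ⊤ := by
  classical
  haveI : NeZero n := ⟨hn⟩
  let e : Matrix (Fin n) (Fin n) K ≃ₐ[K] Module.End K (Fin n → K) := Matrix.toLinAlgEquiv'
  let A : Subalgebra K (Module.End K (Fin n → K)) :=
    Algebra.adjoin K (Set.range fun g => e (M g))
  have hsmul : ∀ (a : A) (v : Fin n → K), a • v = (a : Module.End K (Fin n → K)) v :=
    fun a v => rfl
  have halg : ∀ (k : K) (v : Fin n → K), (algebraMap K A k) • v = k • v := by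
    intro k v
    rw [hsmul]
    rfl
  -- V is a simple A-module
  have hv1 : (fun _ => (1 : K) : Fin n → K) ≠ 0 := by
    intro h
    exact one_ne_zero (congrFun h ⟨0, Nat.pos_of_ne_zero hn⟩)
  haveI hnt : Nontrivial (Submodule A (Fin n → K)) := by
    refine ⟨⊥, ⊤, fun hbt => ?_⟩
    have : (fun _ => (1 : K) : Fin n → K) ∈ (⊥ : Submodule A (Fin n → K)) := by
      rw [hbt]; trivial
    exact hv1 (by simpa using this)
  haveI hsimple : IsSimpleModule A (Fin n → K) := by
    refine (isSimpleModule_iff _ _).2 ⟨fun W => ?_⟩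
    · let W' : Submodule K (Fin n → K) :=
        { carrier := W
          add_mem' := fun h1 h2 => W.add_mem h1 h2
          zero_mem' := W.zero_mem
          smul_mem' := by
            intro k x hx
            have := W.smul_mem (algebraMap K A k) hx
            rwa [halg] at this }
      have hinv : ∀ g : G, ∀ x ∈ W', (M g).mulVec x ∈ W' := by
        intro g x hx
        have hg : e (M g) ∈ A := Algebra.subset_adjoin ⟨g, rfl⟩
        have := W.smul_mem ⟨_, hg⟩ hx
        rw [hsmul] at this
        have he : (e (M g)) x = (M g).mulVec x := Matrix.toLinAlgEquiv'_apply _ _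
        rw [he] at this
        exact this
      rcases hirr W' hinv with h | h
      · left
        ext x
        simp only [Submodule.mem_bot]
        constructor
        · intro hx
          have : x ∈ W' := hx
          rw [h] at this
          simpa using this
        · rintro rfl
          exact W.zero_mem
      · right
        ext x
        simp only [Submodule.mem_top, iff_true]
        have : x ∈ W' := by rw [h]; trivial
        exact this
  -- Schur
  have schur : ∀ f : (Fin n → K) →ₗ[A] (Fin n → K), ∃ μ : K, ∀ v, f v = μ • v := by
    intro f
    let fK : (Fin n → K) →ₗ[K] (Fin n → K) :=
      { toFun := f
        map_add' := f.map_add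
        map_smul' := by
          intro k v
          simp only [RingHom.id_apply]
          have h1 : k • v = (algebraMap K A k) • v := (halg k v).symm
          have h2 : k • f v = (algebraMap K A k) • f v := (halg k (f v)).symm
          rw [h1, f.map_smul, ← h2]  }
    obtain ⟨μ, hμ⟩ := Module.End.exists_eigenvalue fK
    obtain ⟨v, hv⟩ := hμ.exists_hasEigenvector
    refine ⟨μ, ?_⟩
    let sμ : (Fin n → K) →ₗ[A] (Fin n → K) :=
      { toFun := fun w => f w - μ • w
        map_add' := by
          intro x y
          show f (x + y) - μ • (x + y) = (f x - μ • x) + (f y - μ • y)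
          rw [f.map_add, smul_add]
          abel
        map_smul' := by
          intro a w
          simp only [RingHom.id_apply]
          show f (a • w) - μ • (a • w) = a • (f w - μ • w)
          rw [f.map_smul]
          simp only [hsmul]
          rw [(a : Module.End K (Fin n → K)).map_sub]
          congr 1
          exact ((a : Module.End K (Fin n → K)).map_smul μ w).symm }
    have hker : sμ = 0 := by
      rcases LinearMap.injective_or_eq_zero (R := A) sμ with hinj | h
      · exfalso
        have hz : sμ v = 0 := by
          have := hv.apply_eq_smul
          show fK v - μ • v = 0
          rw [this, sub_self]
        exact hv.2 (hinj (by rw [hz, map_zero]))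
      · exact h
    intro w
    have := congrArg (fun h => h w) hker
    simp only [LinearMap.zero_apply] at this
    have h2 : f w - μ • w = 0 := this
    rw [sub_eq_zero] at h2
    exact h2
  -- Density
  have density : ∀ f : Module.End K (Fin n → K), f ∈ A := by
    intro f
    haveI : IsSemisimpleModule A (Fin n → (Fin n → K)) :=
      pi_isSemisimpleModule A (Fin n → K) n
    let b : Fin n → (Fin n → K) := fun i => Pi.single i 1
    let w₀ : Fin n → (Fin n → K) := b
    let U : Submodule A (Fin n → (Fin n → K)) := Submodule.span A {w₀}
    haveI : ComplementedLattice (Submodule A (Fin n → (Fin n → K))) :=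
      this.toComplementedLattice
    obtain ⟨U', hcompl⟩ := exists_isCompl U
    let p : (Fin n → (Fin n → K)) →ₗ[A] (Fin n → (Fin n → K)) :=
      U.subtype.comp (Submodule.linearProjOfIsCompl (R := A) U U' hcompl)
    have hp_mem : ∀ w, p w ∈ U := fun w => (Submodule.linearProjOfIsCompl (R := A) U U' hcompl w).2
    have hp_fix : ∀ w ∈ U, p w = w := by
      intro w hw
      show (U.subtype (Submodule.linearProjOfIsCompl (R := A) U U' hcompl w) : Fin n → (Fin n → K)) = w
      rw [show Submodule.linearProjOfIsCompl (R := A) U U' hcompl w = ⟨w, hw⟩ from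
        Submodule.projectionOnto_apply_left hcompl ⟨w, hw⟩]
      rfl
    have comp : ∀ i j : Fin n, ∃ c : K, ∀ v : Fin n → K,
        p (LinearMap.single A (fun _ : Fin n => (Fin n → K)) j v) i = c • v := by
      intro i j
      obtain ⟨c, hc⟩ := schur ((LinearMap.proj i).comp
        (p.comp (LinearMap.single A (fun _ : Fin n => (Fin n → K)) j)))
      exact ⟨c, fun v => hc v⟩
    choose c hc using comp
    have hp_formula : ∀ w : Fin n → (Fin n → K), ∀ i, p w i = ∑ j, c i j • w j := by
      intro w i
      have hw : w = ∑ j, LinearMap.single A (fun _ : Fin n => (Fin n → K)) j (w j) := by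
        simp only [LinearMap.coe_single]
        exact (Finset.univ_sum_single w).symm
      conv_lhs => rw [hw]
      rw [map_sum]
      simp only [Finset.sum_apply]
      exact Finset.sum_congr rfl fun j _ => hc i j (w j)
    have hfix : ∀ i, ∑ j, c i j • b j = b i := by
      intro i
      have h1 : p w₀ = w₀ := hp_fix w₀ (Submodule.mem_span_singleton_self w₀)
      have := congrFun h1 i
      rw [hp_formula] at this
      exact this
    let wf : Fin n → (Fin n → K) := fun i => f (b i)
    have hwfU : wf ∈ U := by
      have hpwf : p wf = wf := by
        funext i
        rw [hp_formula]
        have h2 : ∑ j, c i j • f (b j) = f (∑ j, c i j • b j) := by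
          rw [map_sum]
          exact Finset.sum_congr rfl fun j _ => (f.map_smul _ _).symm
        show ∑ j, c i j • f (b j) = wf i
        rw [h2, hfix]
      rw [← hpwf]
      exact hp_mem wf
    rw [show U = Submodule.span A {w₀} from rfl, Submodule.mem_span_singleton] at hwfU
    obtain ⟨a, haeq⟩ := hwfU
    have hfa : f = (a : Module.End K (Fin n → K)) := by
      apply (Pi.basisFun K (Fin n)).ext
      intro i
      have := congrFun haeq i
      simp only [Pi.smul_apply] at this
      rw [hsmul] at this
      rw [Pi.basisFun_apply]
      exact this.symm
    rw [hfa]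
    exact a.2
  have hAtop : A = ⊤ := by
    rw [Algebra.eq_top_iff]
    intro x; exact density x
  -- transfer to span statement
  let Ml : G →* Module.End K (Fin n → K) :=
    { toFun := fun g => e (M g)
      map_one' := by simp
      map_mul' := fun g h => by simp }
  have hclos : (Submonoid.closure (Set.range fun g => e (M g)) : Set (Module.End K (Fin n → K)))
      = Set.range fun g => e (M g) := by
    have hr : Set.range (fun g => e (M g)) = (MonoidHom.mrange Ml : Set (Module.End K (Fin n → K))) := by
      ext x
      simp only [Set.mem_range, MonoidHom.coe_mrange]
      rfl
    rw [hr, Submonoid.closure_eq]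
  have hspanE : Submodule.span K (Set.range fun g => e (M g)) = ⊤ := by
    have h1 := Algebra.adjoin_eq_span (R := K)
      (s := Set.range fun g => e (M g))
    rw [hclos] at h1
    rw [← h1]
    show Subalgebra.toSubmodule A = ⊤
    rw [hAtop]
    rfl
  have hmap := congrArg (Submodule.map (e.toLinearEquiv.symm : Module.End K (Fin n → K) ≃ₗ[K] Matrix (Fin n) (Fin n) K).toLinearMap) hspanE
  rw [Submodule.map_span, Submodule.map_top, LinearEquiv.range] at hmap
  rw [← hmap]
  congr 1
  rw [← Set.range_comp]
  exact (congrArg Set.range (funext fun g => e.toLinearEquiv.symm_apply_apply (M g))).symm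

lemma span_residue_top {F : Type} [Field F] {n : ℕ} (hn : n ≠ 0) {G : Type} [Group G]
    (ρbar : G →* GL (Fin n) F) (habs : AbsolutelyIrreducible ρbar) :
    Submodule.span F (Set.range fun g => ((ρbar g : Matrix (Fin n) (Fin n) F))) = ⊤ := by
  classical
  let K := AlgebraicClosure F
  let M : G →* Matrix (Fin n) (Fin n) K :=
    ((algebraMap F K).mapMatrix.toMonoidHom).comp ((Units.coeHom _).comp ρbar)
  have hM : ∀ g, M g = ((ρbar g : Matrix (Fin n) (Fin n) F)).map (algebraMap F K) :=
    fun g => rfl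
  have hspanK : Submodule.span K (Set.range fun g => M g) = ⊤ := by
    refine burnside_span hn M (fun W hW => habs K W ?_)
    intro g x hx
    have := hW g x hx
    rwa [hM] at this
  by_contra hN
  set N := Submodule.span F (Set.range fun g => ((ρbar g : Matrix (Fin n) (Fin n) F))) with hNdef
  haveI := (Submodule.Quotient.nontrivial_iff (p := N)).mpr hN
  obtain ⟨q, hq⟩ := exists_ne (0 : Matrix (Fin n) (Fin n) F ⧸ N)
  have hψex : ∃ ψ : Module.Dual F (Matrix (Fin n) (Fin n) F ⧸ N), ψ q ≠ 0 := by
    by_contra h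
    push_neg at h
    exact hq ((Module.forall_dual_apply_eq_zero_iff F q).mp h)
  obtain ⟨ψ, hψ⟩ := hψex
  let φ : Module.Dual F (Matrix (Fin n) (Fin n) F) := ψ.comp N.mkQ
  have hφ0 : ∀ g : G, φ ((ρbar g : Matrix (Fin n) (Fin n) F)) = 0 := by
    intro g
    have hmem : ((ρbar g : Matrix (Fin n) (Fin n) F)) ∈ N := Submodule.subset_span ⟨g, rfl⟩
    show ψ (N.mkQ _) = 0
    rw [show N.mkQ ((ρbar g : Matrix (Fin n) (Fin n) F)) = 0 from
      (Submodule.Quotient.mk_eq_zero N).mpr hmem, map_zero]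
  -- expansion of φ in terms of matrix units
  have hφexp : ∀ A : Matrix (Fin n) (Fin n) F,
      φ A = ∑ p : Fin n × Fin n, A p.1 p.2 * φ (Matrix.single p.1 p.2 1) := by
    intro A
    conv_lhs => rw [matrix_eq_sum_single A]
    rw [map_sum, Fintype.sum_prod_type]
    refine Finset.sum_congr rfl fun i _ => ?_
    rw [map_sum]
    refine Finset.sum_congr rfl fun j _ => ?_
    rw [show Matrix.single i j (A i j) = A i j • Matrix.single i j (1 : F) by
      rw [smul_single, smul_eq_mul, mul_one], _root_.map_smul, smul_eq_mul]
  -- the K-linear functional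
  let c : Fin n × Fin n → K := fun p => algebraMap F K (φ (Matrix.single p.1 p.2 1))
  let ψ' : Matrix (Fin n) (Fin n) K →ₗ[K] K :=
    { toFun := fun B => ∑ p : Fin n × Fin n, c p * B p.1 p.2
      map_add' := by
        intro B C
        simp only [Matrix.add_apply, mul_add]
        rw [Finset.sum_add_distrib]
      map_smul' := by
        intro k B
        simp only [Matrix.smul_apply, smul_eq_mul, RingHom.id_apply]
        rw [Finset.mul_sum]
        exact Finset.sum_congr rfl fun p _ => by ring }
  have hψ'M : ∀ g : G, ψ' (M g) = 0 := by
    intro g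
    show ∑ p : Fin n × Fin n, c p * (M g) p.1 p.2 = 0
    have hstep : ∀ p : Fin n × Fin n, c p * (M g) p.1 p.2 =
        algebraMap F K ((ρbar g : Matrix (Fin n) (Fin n) F) p.1 p.2
          * φ (Matrix.single p.1 p.2 1)) := by
      intro p
      rw [hM, Matrix.map_apply, _root_.map_mul]
      ring
    rw [Finset.sum_congr rfl fun p _ => hstep p, ← map_sum, ← hφexp, hφ0, map_zero]
  have hker : ψ' = 0 := by
    have hle : Submodule.span K (Set.range fun g => M g) ≤ LinearMap.ker ψ' := by
      rw [Submodule.span_le]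
      rintro x ⟨g, rfl⟩
      exact hψ'M g
    rw [hspanK] at hle
    apply LinearMap.ext
    intro B
    exact hle Submodule.mem_top
  have hE : ∀ i j : Fin n, φ (Matrix.single i j 1) = 0 := by
    intro i j
    have h1 : ψ' (Matrix.single i j (1 : K)) = c (i, j) := by
      show ∑ p : Fin n × Fin n, c p * Matrix.single i j (1 : K) p.1 p.2 = c (i, j)
      rw [Finset.sum_eq_single (i, j)]
      · simp
      · intro p _ hp
        have hz : Matrix.single i j (1 : K) p.1 p.2 = 0 := by
          apply Matrix.single_apply_of_ne
          intro hc
          exact hp (Prod.ext hc.1.symm hc.2.symm)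
        rw [hz, mul_zero]
      · intro h
        exact absurd (Finset.mem_univ _) h
    have h2 : c (i, j) = 0 := by
      rw [← h1, hker]
      rfl
    apply (algebraMap F K).injective
    rw [map_zero]
    exact h2
  have hφ : φ = 0 := by
    apply LinearMap.ext
    intro A
    rw [hφexp A]
    simp only [hE, mul_zero, Finset.sum_const_zero, LinearMap.zero_apply]
  obtain ⟨x, hx⟩ := N.mkQ_surjective q
  apply hψ
  rw [← hx]
  have := congrArg (fun t : Module.Dual F (Matrix (Fin n) (Fin n) F) => t x) hφ
  simpa [φ] using this

/-- The centralizer of a lift of an absolutely irreducible representation consists of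
scalar matrices. -/
theorem stmt_7 (n : ℕ) (R : Type) [CommRing R] [IsLocalRing R] [IsNoetherianRing R]
    [IsAdicComplete (maximalIdeal R) R]
    [TopologicalSpace R] [IsTopologicalRing R]
    (G : Type) [Group G] [TopologicalSpace G] [IsTopologicalGroup G]
    [CompactSpace G] [TotallyDisconnectedSpace G] [T2Space G]
    (ρbar : G →* GL (Fin n) (ResidueField R)) (habs : AbsolutelyIrreducible ρbar)
    (ρ : G →* GL (Fin n) R) (hcont : Continuous ρ)
    (hlift : ∀ g : G, Units.map ((residue R).mapMatrix).toMonoidHom (ρ g) = ρbar g)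
    (a : GL (Fin n) R) (ha : ∀ g : G, a * ρ g * a⁻¹ = ρ g) :
    ∃ r : Rˣ, (a : Matrix (Fin n) (Fin n) R) = (r : R) • (1 : Matrix (Fin n) (Fin n) R) := by
  classical
  rcases Nat.eq_zero_or_pos n with hn0 | hnpos
  · subst hn0
    refine ⟨1, ?_⟩
    ext i j
    exact i.elim0
  have hn : n ≠ 0 := Nat.pos_iff_ne_zero.mp hnpos
  have hspanF := span_residue_top hn ρbar habs
  have hres : ∀ g : G, ((ρ g : Matrix (Fin n) (Fin n) R)).map (residue R)
      = (ρbar g : Matrix (Fin n) (Fin n) (ResidueField R)) := by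
    intro g
    have h1 := congrArg Units.val (hlift g)
    simpa [RingHom.mapMatrix_apply] using h1
  set N : Submodule R (Matrix (Fin n) (Fin n) R) :=
    Submodule.span R (Set.range fun g => (ρ g : Matrix (Fin n) (Fin n) R)) with hNdef
  have hNtop : N = ⊤ := by
    refine le_antisymm le_top ?_
    have hfg : (⊤ : Submodule R (Matrix (Fin n) (Fin n) R)).FG := Module.Finite.fg_top
    refine Submodule.le_of_le_smul_of_le_jacobson_bot hfg
      (IsLocalRing.maximalIdeal_le_jacobson ⊥) ?_
    intro x _
    have hxbar : (x.map (residue R)) ∈ Submodule.span (ResidueField R)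
        (Set.range fun g => (ρbar g : Matrix (Fin n) (Fin n) (ResidueField R))) := by
      rw [hspanF]; trivial
    rw [Finsupp.mem_span_range_iff_exists_finsupp] at hxbar
    obtain ⟨cbar, hc⟩ := hxbar
    choose clift hclift using fun g => IsLocalRing.residue_surjective (R := R) (cbar g)
    set y : Matrix (Fin n) (Fin n) R :=
      ∑ g ∈ cbar.support, clift g • (ρ g : Matrix (Fin n) (Fin n) R) with hy
    have hyN : y ∈ N := Submodule.sum_mem _ fun g _ => Submodule.smul_mem _ _
      (Submodule.subset_span ⟨g, rfl⟩)
    have hxy : ∀ i j, (x - y) i j ∈ maximalIdeal R := by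
      intro i j
      rw [← IsLocalRing.residue_eq_zero_iff]
      have hcij := congrFun (congrFun hc i) j
      have hyij : residue R (y i j) = ∑ g ∈ cbar.support,
          cbar g * (ρbar g : Matrix (Fin n) (Fin n) (ResidueField R)) i j := by
        rw [hy, Matrix.sum_apply, map_sum]
        refine Finset.sum_congr rfl fun g _ => ?_
        rw [Matrix.smul_apply, smul_eq_mul, _root_.map_mul, hclift]
        rw [← hres g, Matrix.map_apply]
      have hsum : (cbar.sum fun g b =>
          b • (ρbar g : Matrix (Fin n) (Fin n) (ResidueField R))) i j
          = ∑ g ∈ cbar.support,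
            cbar g * (ρbar g : Matrix (Fin n) (Fin n) (ResidueField R)) i j := by
        rw [Finsupp.sum, Matrix.sum_apply]
        refine Finset.sum_congr rfl fun g _ => ?_
        rw [Matrix.smul_apply, smul_eq_mul]
      rw [Matrix.sub_apply, map_sub, hyij, ← hsum, hcij, Matrix.map_apply, sub_self]
    have hxmy : x - y ∈ (maximalIdeal R) • (⊤ : Submodule R (Matrix (Fin n) (Fin n) R)) := by
      rw [matrix_eq_sum_single (x - y)]
      refine Submodule.sum_mem _ fun i _ => Submodule.sum_mem _ fun j _ => ?_
      rw [show Matrix.single i j ((x - y) i j)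
          = (x - y) i j • Matrix.single i j (1 : R) by
        rw [smul_single, smul_eq_mul, mul_one]]
      exact Submodule.smul_mem_smul (hxy i j) Submodule.mem_top
    have hxsum : x = y + (x - y) := by abel
    rw [hxsum]
    exact Submodule.add_mem_sup hyN hxmy
  -- a commutes with everything
  have hcomm0 : ∀ g : G, (a : Matrix (Fin n) (Fin n) R) * (ρ g : Matrix (Fin n) (Fin n) R)
      = (ρ g : Matrix (Fin n) (Fin n) R) * a := by
    intro g
    have h1 : a * ρ g = ρ g * a := by
      have h2 := congrArg (fun u => u * a) (ha g)
      simpa [mul_assoc] using h2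
    have := congrArg Units.val h1
    simpa [Units.val_mul] using this
  let C : Submodule R (Matrix (Fin n) (Fin n) R) :=
    { carrier := {X | (a : Matrix (Fin n) (Fin n) R) * X = X * a}
      add_mem' := by
        intro X Y hX hY
        simp only [Set.mem_setOf_eq] at *
        rw [mul_add, add_mul, hX, hY]
      zero_mem' := by simp
      smul_mem' := by
        intro r X hX
        simp only [Set.mem_setOf_eq] at *
        rw [Matrix.mul_smul, Matrix.smul_mul, hX] }
  have hCtop : (⊤ : Submodule R (Matrix (Fin n) (Fin n) R)) ≤ C := by
    rw [← hNtop, hNdef, Submodule.span_le]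
    rintro X ⟨g, rfl⟩
    exact hcomm0 g
  have hcomm : ∀ X : Matrix (Fin n) (Fin n) R,
      (a : Matrix (Fin n) (Fin n) R) * X = X * a := fun X => hCtop Submodule.mem_top
  obtain ⟨r, hr⟩ := Matrix.mem_range_scalar_of_commute_single
    (M := (a : Matrix (Fin n) (Fin n) R)) (fun i j _ => (hcomm _).symm)
  have hscal : (Matrix.scalar (Fin n)) r = r • (1 : Matrix (Fin n) (Fin n) R) := by
    rw [Matrix.scalar_apply]
    ext i j
    by_cases hij : i = j
    · subst hij; simp
    · simp [Matrix.diagonal_apply_ne _ hij, Matrix.one_apply_ne hij]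
  have hdet : IsUnit ((a : Matrix (Fin n) (Fin n) R).det) :=
    (Matrix.isUnit_iff_isUnit_det _).mp a.isUnit
  rw [← hr, hscal, Matrix.det_smul, det_one, mul_one, Fintype.card_fin] at hdet
  have hunit : IsUnit r := (isUnit_pow_iff hn).mp hdet
  refine ⟨hunit.unit, ?_⟩
  rw [← hr, hscal, IsUnit.unit_spec]
end

section
/- Let R be a complete local Noetherian ring with residue field F, G a profinite group, ρ̄ : G → GL_2(F) absolutely irreducible, and ρ, ρ' : G → GL_2(R) two continuous lifts of ρ̄ with tr ρ(g) = tr ρ'(g) for all g ∈ G. Then there exists a ∈ ker(GL_2(R) → GL_2(F)) with ρ'(g) = a ρ(g) a⁻¹ for all g ∈ G. -/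
open Matrix IsLocalRing

section Burnside
variable {K : Type*} [Field K]

/-- In `K²`, a proper subspace is annihilated by a nonzero vector under dot product. -/
lemma exists_dual_ann (N : Submodule K (Fin 2 → K)) (hN : N ≠ ⊤) :
    ∃ x : Fin 2 → K, x ≠ 0 ∧ ∀ u ∈ N, u ⬝ᵥ x = 0 := by
  by_cases h0 : ∀ u ∈ N, u = 0
  · refine ⟨Pi.single 0 1, ?_, fun u hu => by rw [h0 u hu, zero_dotProduct]⟩
    intro h
    have := congrFun h 0
    simp at this
  · push_neg at h0
    obtain ⟨u₀, hu₀N, hu₀⟩ := h0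
    refine ⟨![u₀ 1, -u₀ 0], ?_, ?_⟩
    · intro h
      apply hu₀
      have h0 := congrFun h 0
      have h1 := congrFun h 1
      simp at h0 h1
      funext i
      fin_cases i <;> simp [h0, h1]
    · intro u hu
      by_contra hne
      apply hN
      set M : Matrix (Fin 2) (Fin 2) K := Matrix.of ![u₀, u] with hM
      have hdet : M.det ≠ 0 := by
        rw [det_fin_two]
        have hx : u ⬝ᵥ ![u₀ 1, -u₀ 0] = u 0 * u₀ 1 - u 1 * u₀ 0 := by
          simp [dotProduct, Fin.sum_univ_two]; ring
        rw [hx] at hne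
        simp only [hM, Matrix.of_apply]
        simp only [Matrix.cons_val_zero, Matrix.cons_val_one, Matrix.head_cons]
        intro h
        exact hne (by linear_combination -h)
      rw [eq_top_iff]
      intro z _
      have hz : z = (z ᵥ* M⁻¹) ᵥ* M := by
        rw [vecMul_vecMul, Matrix.nonsing_inv_mul M (isUnit_iff_ne_zero.mpr hdet), vecMul_one]
      have key : ∀ c : Fin 2 → K, c ᵥ* M ∈ N := by
        intro c
        have : c ᵥ* M = c 0 • u₀ + c 1 • u := by
          funext j
          simp [vecMul, dotProduct, Fin.sum_univ_two, hM]
        rw [this]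
        exact N.add_mem (N.smul_mem _ hu₀N) (N.smul_mem _ hu)
      rw [hz]
      exact key _

/-- Rank one decomposition of a singular nonzero 2×2 matrix. -/
lemma rank_one_decomp (b : Matrix (Fin 2) (Fin 2) K) (hb : b ≠ 0) (hdet : b.det = 0) :
    ∃ v w : Fin 2 → K, v ≠ 0 ∧ w ≠ 0 ∧ b = vecMulVec v w := by
  rw [det_fin_two] at hdet
  by_cases hp : b 0 0 ≠ 0
  · refine ⟨![1, b 1 0 / b 0 0], ![b 0 0, b 0 1], ?_, ?_, ?_⟩
    · intro h; have := congrFun h 0; simp at this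
    · intro h; have := congrFun h 0; simp at this; exact hp this
    · ext i j
      fin_cases i <;> fin_cases j <;> simp [vecMulVec]
      · field_simp
      · field_simp
        linear_combination hdet
  · push_neg at hp
    by_cases hq : b 0 1 ≠ 0
    · have hr : b 1 0 = 0 := by
        have h1 : b 0 1 * b 1 0 = 0 := by linear_combination b 1 1 * hp - hdet
        rcases mul_eq_zero.mp h1 with h | h
        · exact absurd h hq
        · exact h
      refine ⟨![1, b 1 1 / b 0 1], ![b 0 0, b 0 1], ?_, ?_, ?_⟩
      · intro h; have := congrFun h 0; simp at this
      · intro h; have := congrFun h 1; simp at this; exact hq this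
      · ext i j
        fin_cases i <;> fin_cases j <;> simp [vecMulVec, hp, hr]
        field_simp
    · push_neg at hq
      refine ⟨![0, 1], ![b 1 0, b 1 1], ?_, ?_, ?_⟩
      · intro h; have := congrFun h 1; simp at this
      · intro h
        apply hb
        have h0 := congrFun h 0
        have h1 := congrFun h 1
        simp at h0 h1
        ext i j
        fin_cases i <;> fin_cases j <;> simp [hp, hq, h0, h1]
      · ext i j
        fin_cases i <;> fin_cases j <;> simp [vecMulVec, hp, hq]

lemma mul_vecMulVec_mul (a₁ a₂ : Matrix (Fin 2) (Fin 2) K) (v w : Fin 2 → K) :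
    a₁ * vecMulVec v w * a₂ = vecMulVec (a₁ *ᵥ v) (w ᵥ* a₂) := by
  ext i j
  simp [mul_apply, vecMulVec, mulVec, vecMul, dotProduct, Fin.sum_univ_two]
  ring

end Burnside

variable {K : Type*} [Field K]

/-- the linear map `a ↦ a *ᵥ v`. -/
def mulVecAt (v : Fin 2 → K) : Matrix (Fin 2) (Fin 2) K →ₗ[K] (Fin 2 → K) where
  toFun a := a *ᵥ v
  map_add' a b := add_mulVec a b v
  map_smul' c a := smul_mulVec c a v

/-- the linear map `a ↦ w ᵥ* a`. -/
def vecMulAt (w : Fin 2 → K) : Matrix (Fin 2) (Fin 2) K →ₗ[K] (Fin 2 → K) where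
  toFun a := w ᵥ* a
  map_add' a b := by simp [vecMul_add]
  map_smul' c a := by
    funext j
    simp only [vecMul, dotProduct, Pi.smul_apply, Matrix.smul_apply, smul_eq_mul,
      RingHom.id_apply, Finset.mul_sum]
    exact Finset.sum_congr rfl fun i _ => by ring

theorem burnside2 [IsAlgClosed K] (A : Submodule K (Matrix (Fin 2) (Fin 2) K))
    (h1 : (1 : Matrix (Fin 2) (Fin 2) K) ∈ A)
    (hmul : ∀ x ∈ A, ∀ y ∈ A, x * y ∈ A)
    (hirr : ∀ W : Submodule K (Fin 2 → K),
      (∀ a ∈ A, ∀ x ∈ W, a *ᵥ x ∈ W) → W = ⊥ ∨ W = ⊤) :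
    A = ⊤ := by
  -- column spans
  have hcol : ∀ v : Fin 2 → K, v ≠ 0 → ∀ x : Fin 2 → K, ∃ a ∈ A, a *ᵥ v = x := by
    intro v hv x
    have hWinv : ∀ a ∈ A, ∀ y ∈ A.map (mulVecAt v), a *ᵥ y ∈ A.map (mulVecAt v) := by
      rintro a ha y ⟨b, hb, rfl⟩
      exact ⟨a * b, hmul a ha b hb, (mulVec_mulVec v a b).symm⟩
    rcases hirr _ hWinv with h | h
    · exfalso
      have : v ∈ A.map (mulVecAt v) := ⟨1, h1, one_mulVec v⟩
      rw [h] at this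
      exact hv (by simpa using this)
    · have : x ∈ A.map (mulVecAt v) := h ▸ Submodule.mem_top
      obtain ⟨a, ha, hax⟩ := this
      exact ⟨a, ha, hax⟩
  -- row spans
  have hrow : ∀ w : Fin 2 → K, w ≠ 0 → ∀ y : Fin 2 → K, ∃ a ∈ A, w ᵥ* a = y := by
    intro w hw y
    set N := A.map (vecMulAt w) with hNdef
    by_cases hN : N = ⊤
    · have : y ∈ N := hN ▸ Submodule.mem_top
      obtain ⟨a, ha, hay⟩ := this
      exact ⟨a, ha, hay⟩
    · exfalso
      obtain ⟨x, hx0, hxann⟩ := exists_dual_ann N hN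
      -- V := {x' | ∀ a ∈ A, w ⬝ᵥ (a *ᵥ x') = 0}
      let V : Submodule K (Fin 2 → K) :=
        { carrier := {x' | ∀ a ∈ A, w ⬝ᵥ (a *ᵥ x') = 0}
          add_mem' := by
            intro p q hp hq a ha
            rw [mulVec_add, dotProduct_add, hp a ha, hq a ha, add_zero]
          zero_mem' := by intro a ha; rw [mulVec_zero, dotProduct_zero]
          smul_mem' := by
            intro c p hp a ha
            rw [mulVec_smul, dotProduct_smul, hp a ha, smul_zero] }
      have hVinv : ∀ a ∈ A, ∀ z ∈ V, a *ᵥ z ∈ V := by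
        intro a ha z hz a' ha'
        rw [mulVec_mulVec]
        exact hz (a' * a) (hmul a' ha' a ha)
      rcases hirr V hVinv with h | h
      · have hxV : x ∈ V := by
          intro a ha
          rw [dotProduct_mulVec]
          exact hxann _ ⟨a, ha, rfl⟩
        rw [h] at hxV
        exact hx0 hxV
      · -- V = ⊤ forces w = 0
        apply hw
        funext i
        have := (h ▸ Submodule.mem_top : Pi.single i 1 ∈ V) 1 h1
        rw [one_mulVec] at this
        simpa using this
  -- a nonscalar element
  have hns : ∃ a₀ ∈ A, ∀ c : K, a₀ ≠ c • (1 : Matrix (Fin 2) (Fin 2) K) := by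
    by_contra h
    push_neg at h
    have hsc : ∀ a ∈ A, ∃ c : K, a = c • (1 : Matrix (Fin 2) (Fin 2) K) := h
    have hWinv : ∀ a ∈ A, ∀ x ∈ Submodule.span K ({Pi.single 0 1} : Set (Fin 2 → K)),
        a *ᵥ x ∈ Submodule.span K ({Pi.single 0 1} : Set (Fin 2 → K)) := by
      intro a ha x hx
      obtain ⟨c, rfl⟩ := hsc a ha
      rw [smul_mulVec, one_mulVec]
      exact Submodule.smul_mem _ c hx
    rcases hirr _ hWinv with h' | h'
    · have : (Pi.single 0 1 : Fin 2 → K) ∈ Submodule.span K ({Pi.single 0 1} : Set (Fin 2 → K)) :=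
        Submodule.mem_span_singleton_self _
      rw [h'] at this
      have := congrFun ((Submodule.mem_bot K).mp this) 0
      simp at this
    · have : (Pi.single 1 1 : Fin 2 → K) ∈ Submodule.span K ({Pi.single 0 1} : Set (Fin 2 → K)) :=
        h' ▸ Submodule.mem_top
      obtain ⟨c, hc⟩ := Submodule.mem_span_singleton.mp this
      have := congrFun hc 1
      simp at this
  obtain ⟨a₀, ha₀A, ha₀⟩ := hns
  -- eigenvalue
  have heig : ∃ lam : K, (a₀ - lam • (1 : Matrix (Fin 2) (Fin 2) K)).det = 0 := by
    obtain ⟨lam, hlam⟩ := IsAlgClosed.exists_root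
      (Polynomial.C 1 * Polynomial.X ^ 2 + Polynomial.C (-(a₀.trace)) * Polynomial.X
        + Polynomial.C a₀.det)
      (by rw [Polynomial.degree_quadratic one_ne_zero]; exact two_ne_zero)
    refine ⟨lam, ?_⟩
    have := hlam
    rw [Polynomial.IsRoot.def] at this
    simp only [Polynomial.eval_add, Polynomial.eval_mul, Polynomial.eval_pow,
      Polynomial.eval_C, Polynomial.eval_X] at this
    rw [det_fin_two]
    rw [det_fin_two, trace_fin_two] at this
    simp only [Matrix.sub_apply, Matrix.smul_apply, Matrix.one_apply, smul_eq_mul]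
    norm_num
    linear_combination this
  obtain ⟨lam, hlam⟩ := heig
  set b := a₀ - lam • (1 : Matrix (Fin 2) (Fin 2) K) with hbdef
  have hbA : b ∈ A := A.sub_mem ha₀A (A.smul_mem lam h1)
  have hbne : b ≠ 0 := by
    intro h
    exact ha₀ lam (by rw [← sub_eq_zero]; exact h)
  obtain ⟨v, w, hv, hw, hvw⟩ := rank_one_decomp b hbne hlam
  -- conclude
  rw [eq_top_iff]
  intro X _
  have hrank1 : ∀ x y : Fin 2 → K, vecMulVec x y ∈ A := by
    intro x y
    obtain ⟨a₁, ha₁, ha₁x⟩ := hcol v hv x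
    obtain ⟨a₂, ha₂, ha₂y⟩ := hrow w hw y
    have : a₁ * b * a₂ = vecMulVec x y := by
      rw [hvw, mul_vecMulVec_mul, ha₁x, ha₂y]
    rw [← this]
    exact hmul _ (hmul a₁ ha₁ b hbA) _ ha₂
  have hstd : ∀ (i j : Fin 2) (c : K), Matrix.single i j c ∈ A := by
    intro i j c
    have : Matrix.single i j c = vecMulVec (Pi.single i c) (Pi.single j 1) := by
      ext a b'
      fin_cases i <;> fin_cases j <;> fin_cases a <;> fin_cases b' <;>
        simp [Matrix.single, vecMulVec, Pi.single_apply]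
    rw [this]
    exact hrank1 _ _
  rw [matrix_eq_sum_single X]
  exact Submodule.sum_mem _ fun i _ => Submodule.sum_mem _ fun j _ => hstd i j _

/-- The entrywise coordinate map on 2×2 matrices as a linear map. -/
def coordMap (K : Type*) [Field K] :
    Matrix (Fin 2) (Fin 2) K →ₗ[K] (Fin 2 × Fin 2 → K) where
  toFun X := fun l => X l.1 l.2
  map_add' X Y := rfl
  map_smul' c X := rfl

theorem exists_gen {G : Type} [Group G] {F : Type} [Field F]
    (ρbar : G →* GL (Fin 2) F) (habs : AbsolutelyIrreducible ρbar) :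
    ∃ g : Fin 2 × Fin 2 → G,
      (Matrix.of fun k l : Fin 2 × Fin 2 =>
        (ρbar (g k) : Matrix (Fin 2) (Fin 2) F) l.1 l.2).det ≠ 0 := by
  classical
  set K := AlgebraicClosure F with hK
  set f : G → Matrix (Fin 2) (Fin 2) K :=
    fun g => (ρbar g : Matrix (Fin 2) (Fin 2) F).map (algebraMap F K) with hf
  have hfmul : ∀ g h : G, f g * f h = f (g * h) := by
    intro g h
    have hval : (ρbar (g * h) : Matrix (Fin 2) (Fin 2) F)
        = (ρbar g : Matrix (Fin 2) (Fin 2) F) * (ρbar h : Matrix (Fin 2) (Fin 2) F) := by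
      rw [_root_.map_mul]; rfl
    simp only [hf, hval, Matrix.map_mul]
  have hf1 : f 1 = 1 := by
    have hval : (ρbar (1 : G) : Matrix (Fin 2) (Fin 2) F) = 1 := by
      rw [_root_.map_one]; rfl
    simp [hf, hval]
  set A := Submodule.span K (Set.range f) with hA
  have hgen : ∀ g : G, f g ∈ A := fun g => Submodule.subset_span ⟨g, rfl⟩
  have h1A : (1 : Matrix (Fin 2) (Fin 2) K) ∈ A := hf1 ▸ hgen 1
  have hmulA : ∀ x ∈ A, ∀ y ∈ A, x * y ∈ A := by
    intro x hx y hy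
    induction hx using Submodule.span_induction with
    | mem x hxs =>
      induction hy using Submodule.span_induction with
      | mem y hys =>
        obtain ⟨g, rfl⟩ := hxs
        obtain ⟨h, rfl⟩ := hys
        rw [hfmul]
        exact hgen _
      | zero => rw [mul_zero]; exact A.zero_mem
      | add y z _ _ hy hz => rw [mul_add]; exact A.add_mem hy hz
      | smul c y _ hy => rw [mul_smul_comm]; exact A.smul_mem c hy
    | zero => rw [zero_mul]; exact A.zero_mem
    | add x z _ _ hx' hz' => rw [add_mul]; exact A.add_mem hx' hz'
    | smul c x _ hx' => rw [smul_mul_assoc]; exact A.smul_mem c hx'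
  have hAtop : A = ⊤ := by
    apply burnside2 A h1A hmulA
    intro W hW
    apply habs K W
    intro g x hx
    exact hW (f g) (hgen g) x hx
  obtain ⟨s, hsub, hspan, hli⟩ := exists_linearIndependent K (Set.range f)
  rw [← hA, hAtop] at hspan
  have hsfin : s.Finite := hli.setFinite
  haveI := hsfin.fintype
  have hb : Module.Basis s K (Matrix (Fin 2) (Fin 2) K) :=
    Module.Basis.mk hli (by rw [Subtype.range_coe, hspan])
  have hcard : Fintype.card s = 4 := by
    have h1 := Module.finrank_eq_card_basis hb
    have h2 : Module.finrank K (Matrix (Fin 2) (Fin 2) K) = 4 := by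
      rw [Module.finrank_matrix]
      simp
    omega
  have e : (Fin 2 × Fin 2) ≃ s := Fintype.equivOfCardEq (by simp [hcard])
  have hu_li : LinearIndependent K (fun k : Fin 2 × Fin 2 => ((e k : Matrix (Fin 2) (Fin 2) K))) :=
    hli.comp e e.injective
  have hgex : ∀ k : Fin 2 × Fin 2, ∃ g : G, f g = (e k : Matrix (Fin 2) (Fin 2) K) :=
    fun k => hsub (e k).2
  choose g hg using hgex
  refine ⟨g, ?_⟩
  set P : Matrix (Fin 2 × Fin 2) (Fin 2 × Fin 2) F :=
    Matrix.of fun k l : Fin 2 × Fin 2 => (ρbar (g k) : Matrix (Fin 2) (Fin 2) F) l.1 l.2 with hP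
  intro hdet
  have hker : LinearMap.ker (coordMap K) = ⊥ := by
    rw [LinearMap.ker_eq_bot]
    intro X Y hXY
    ext i j
    exact congrFun hXY (i, j)
  have hrows : LinearIndependent K (fun k => (P.map (algebraMap F K)) k) := by
    have h := hu_li.map' (coordMap K) hker
    convert h using 1
    funext k
    funext l
    have : (e k : Matrix (Fin 2) (Fin 2) K) = f (g k) := (hg k).symm
    rw [Function.comp_apply]
    simp only [coordMap, LinearMap.coe_mk, AddHom.coe_mk, this, hf]
    rfl
    rfl
    rfl
  have hunit : IsUnit (P.map (algebraMap F K)) :=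
    Matrix.linearIndependent_rows_iff_isUnit.mp hrows
  have : IsUnit (P.map (algebraMap F K)).det := (Matrix.isUnit_iff_isUnit_det _).mp hunit
  rw [← RingHom.mapMatrix_apply, ← RingHom.map_det] at this
  rw [hdet] at this
  simp at this

lemma trace_nondeg {R : Type*} [CommRing R] (X : Matrix (Fin 2) (Fin 2) R)
    (h : ∀ Y, (X * Y).trace = 0) : X = 0 := by
  ext i j
  have h' := h (Matrix.single j i 1)
  fin_cases i <;> fin_cases j <;>
    simp [Matrix.trace, Matrix.diag, Matrix.mul_apply, Matrix.single,
      Fin.sum_univ_two] at h' <;> simpa using h'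

lemma exists_basis_of_unit_det {R : Type*} [CommRing R]
    (v : Fin 2 × Fin 2 → Matrix (Fin 2) (Fin 2) R)
    (h : IsUnit (Matrix.of fun k l : Fin 2 × Fin 2 => v k l.1 l.2).det) :
    ∃ b : Module.Basis (Fin 2 × Fin 2) R (Matrix (Fin 2) (Fin 2) R), ∀ k, b k = v k := by
  set Q := Matrix.of fun k l : Fin 2 × Fin 2 => v k l.1 l.2 with hQ
  have hinv : Invertible Qᵀ :=
    Matrix.invertibleOfIsUnitDet _ (by rwa [Matrix.det_transpose])
  set T := Qᵀ.toLinearEquiv' hinv with hT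
  set b0 := Matrix.stdBasis R (Fin 2) (Fin 2) with hb0
  refine ⟨(Pi.basisFun R _).map (T.trans b0.equivFun.symm), ?_⟩
  intro k
  rw [Module.Basis.map_apply, Pi.basisFun_apply]
  simp only [LinearEquiv.trans_apply]
  have hTk : T (Pi.single k 1) = fun l => Q k l := by
    have h1 : T (Pi.single k 1) = Matrix.toLin' Qᵀ (Pi.single k 1) := rfl
    rw [h1, Matrix.toLin'_apply, Matrix.mulVec_single]
    funext l
    simp [Matrix.transpose_apply]
  rw [hTk, Module.Basis.equivFun_symm_apply]
  conv_rhs => rw [matrix_eq_sum_single (v k)]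
  rw [Fintype.sum_prod_type]
  refine Finset.sum_congr rfl fun i _ => Finset.sum_congr rfl fun j _ => ?_
  rw [hb0, Matrix.stdBasis_eq_single, Matrix.smul_single, smul_eq_mul, mul_one]
  rfl

/-- Carayol's lemma: two lifts of an absolutely irreducible residual representation with
equal traces are conjugate by an element reducing to the identity. -/
theorem stmt_8 (R : Type) [CommRing R] [IsLocalRing R] [IsNoetherianRing R]
    [IsAdicComplete (maximalIdeal R) R]
    [TopologicalSpace R] [IsTopologicalRing R]
    (h2 : (2 : ResidueField R) ≠ 0)
    (G : Type) [Group G] [TopologicalSpace G] [IsTopologicalGroup G]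
    [CompactSpace G] [TotallyDisconnectedSpace G] [T2Space G]
    (ρbar : G →* GL (Fin 2) (ResidueField R)) (habs : AbsolutelyIrreducible ρbar)
    (ρ ρ' : G →* GL (Fin 2) R) (hcont : Continuous ρ) (hcont' : Continuous ρ')
    (hlift : ∀ g : G, Units.map ((residue R).mapMatrix).toMonoidHom (ρ g) = ρbar g)
    (hlift' : ∀ g : G, Units.map ((residue R).mapMatrix).toMonoidHom (ρ' g) = ρbar g)
    (htr : ∀ g : G, (ρ g : Matrix (Fin 2) (Fin 2) R).trace = (ρ' g : Matrix (Fin 2) (Fin 2) R).trace) :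
    ∃ a : GL (Fin 2) R,
      Units.map ((residue R).mapMatrix).toMonoidHom a = 1 ∧
      ∀ g : G, ρ' g = a * ρ g * a⁻¹ := by
  classical
  obtain ⟨g, hgdet⟩ := exists_gen ρbar habs
  -- unpack the lifting conditions at the matrix level
  have hlm : ∀ h : G, ((ρ h : Matrix (Fin 2) (Fin 2) R)).map (residue R)
      = (ρbar h : Matrix (Fin 2) (Fin 2) (ResidueField R)) := by
    intro h
    have := congrArg Units.val (hlift h)
    simpa [RingHom.mapMatrix_apply] using this
  have hlm' : ∀ h : G, ((ρ' h : Matrix (Fin 2) (Fin 2) R)).map (residue R)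
      = (ρbar h : Matrix (Fin 2) (Fin 2) (ResidueField R)) := by
    intro h
    have := congrArg Units.val (hlift' h)
    simpa [RingHom.mapMatrix_apply] using this
  have hmulρ : ∀ g₁ g₂ : G, (ρ (g₁ * g₂) : Matrix (Fin 2) (Fin 2) R)
      = (ρ g₁ : Matrix (Fin 2) (Fin 2) R) * (ρ g₂ : Matrix (Fin 2) (Fin 2) R) := by
    intro g₁ g₂; rw [_root_.map_mul]; rfl
  have hmulρ' : ∀ g₁ g₂ : G, (ρ' (g₁ * g₂) : Matrix (Fin 2) (Fin 2) R)
      = (ρ' g₁ : Matrix (Fin 2) (Fin 2) R) * (ρ' g₂ : Matrix (Fin 2) (Fin 2) R) := by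
    intro g₁ g₂; rw [_root_.map_mul]; rfl
  -- lifted coordinate matrices are invertible
  have hdetQ : ∀ v : Fin 2 × Fin 2 → Matrix (Fin 2) (Fin 2) R,
      (∀ k, (v k).map (residue R)
        = (ρbar (g k) : Matrix (Fin 2) (Fin 2) (ResidueField R))) →
      IsUnit (Matrix.of fun k l : Fin 2 × Fin 2 => v k l.1 l.2).det := by
    intro v hv
    set Q := Matrix.of fun k l : Fin 2 × Fin 2 => v k l.1 l.2 with hQdef
    have hres : residue R Q.det
        = (Matrix.of fun k l : Fin 2 × Fin 2 =>
            (ρbar (g k) : Matrix (Fin 2) (Fin 2) (ResidueField R)) l.1 l.2).det := by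
      rw [RingHom.map_det]
      congr 1
      ext k l
      exact congrFun (congrFun (hv k) l.1) l.2
    by_contra hun
    have hmem : Q.det ∈ maximalIdeal R := by
      rw [IsLocalRing.mem_maximalIdeal]
      exact fun hU => hun hU
    have : residue R Q.det = 0 := (IsLocalRing.residue_eq_zero_iff _).mpr hmem
    rw [hres] at this
    exact hgdet this
  obtain ⟨bR, hbR⟩ := exists_basis_of_unit_det (fun k => (ρ (g k) : Matrix (Fin 2) (Fin 2) R))
    (hdetQ _ (fun k => hlm (g k)))
  obtain ⟨bR', hbR'⟩ := exists_basis_of_unit_det (fun k => (ρ' (g k) : Matrix (Fin 2) (Fin 2) R))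
    (hdetQ _ (fun k => hlm' (g k)))
  set φ : Matrix (Fin 2) (Fin 2) R →ₗ[R] Matrix (Fin 2) (Fin 2) R :=
    bR.constr R (fun k => (ρ' (g k) : Matrix (Fin 2) (Fin 2) R)) with hφdef
  have hφb : ∀ k, φ (ρ (g k) : Matrix (Fin 2) (Fin 2) R) = (ρ' (g k) : Matrix (Fin 2) (Fin 2) R) := by
    intro k
    rw [← hbR k, hφdef, Module.Basis.constr_basis]
  -- traces of products agree
  have htrprod : ∀ g₁ g₂ : G,
      ((ρ g₁ : Matrix (Fin 2) (Fin 2) R) * (ρ g₂ : Matrix (Fin 2) (Fin 2) R)).trace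
      = ((ρ' g₁ : Matrix (Fin 2) (Fin 2) R) * (ρ' g₂ : Matrix (Fin 2) (Fin 2) R)).trace := by
    intro g₁ g₂
    rw [← hmulρ, ← hmulρ']
    exact htr _
  -- the key identity : φ ∘ ρ = ρ'
  have key : ∀ h : G, φ (ρ h : Matrix (Fin 2) (Fin 2) R) = (ρ' h : Matrix (Fin 2) (Fin 2) R) := by
    intro h
    have hXtr : ∀ Y : Matrix (Fin 2) (Fin 2) R,
        ((((ρ' h : Matrix (Fin 2) (Fin 2) R) - φ (ρ h : Matrix (Fin 2) (Fin 2) R))) * Y).trace = 0 := by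
      have h1 : ∀ k, (((ρ' h : Matrix (Fin 2) (Fin 2) R) - φ (ρ h : Matrix (Fin 2) (Fin 2) R))
          * (ρ' (g k) : Matrix (Fin 2) (Fin 2) R)).trace = 0 := by
        intro k
        rw [sub_mul, Matrix.trace_sub, sub_eq_zero]
        set c := bR.equivFun (ρ h : Matrix (Fin 2) (Fin 2) R) with hc
        have hφsum : φ (ρ h : Matrix (Fin 2) (Fin 2) R)
            = ∑ l : Fin 2 × Fin 2, c l • (ρ' (g l) : Matrix (Fin 2) (Fin 2) R) := by
          rw [hφdef, Module.Basis.constr_apply_fintype]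
        have hρsum : (ρ h : Matrix (Fin 2) (Fin 2) R)
            = ∑ l : Fin 2 × Fin 2, c l • (ρ (g l) : Matrix (Fin 2) (Fin 2) R) := by
          conv_lhs => rw [← bR.sum_equivFun (ρ h : Matrix (Fin 2) (Fin 2) R)]
          exact Finset.sum_congr rfl fun l _ => by rw [hbR l]
        calc ((ρ' h : Matrix (Fin 2) (Fin 2) R) * (ρ' (g k) : Matrix (Fin 2) (Fin 2) R)).trace
            = ((ρ h : Matrix (Fin 2) (Fin 2) R) * (ρ (g k) : Matrix (Fin 2) (Fin 2) R)).trace :=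
              (htrprod h (g k)).symm
          _ = ∑ l : Fin 2 × Fin 2, c l *
                ((ρ (g l) : Matrix (Fin 2) (Fin 2) R) * (ρ (g k) : Matrix (Fin 2) (Fin 2) R)).trace := by
              conv_lhs => rw [hρsum]
              rw [Finset.sum_mul, Matrix.trace_sum]
              exact Finset.sum_congr rfl fun l _ => by
                rw [smul_mul_assoc, Matrix.trace_smul, smul_eq_mul]
          _ = ∑ l : Fin 2 × Fin 2, c l *
                ((ρ' (g l) : Matrix (Fin 2) (Fin 2) R) * (ρ' (g k) : Matrix (Fin 2) (Fin 2) R)).trace := by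
              exact Finset.sum_congr rfl fun l _ => by rw [htrprod]
          _ = (φ (ρ h : Matrix (Fin 2) (Fin 2) R) * (ρ' (g k) : Matrix (Fin 2) (Fin 2) R)).trace := by
              rw [hφsum, Finset.sum_mul, Matrix.trace_sum]
              exact Finset.sum_congr rfl fun l _ => by
                rw [smul_mul_assoc, Matrix.trace_smul, smul_eq_mul]
      intro Y
      have hY : Y = ∑ k : Fin 2 × Fin 2, bR'.equivFun Y k • (ρ' (g k) : Matrix (Fin 2) (Fin 2) R) := by
        conv_lhs => rw [← bR'.sum_equivFun Y]
        exact Finset.sum_congr rfl fun l _ => by rw [hbR' l]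
      rw [hY, Matrix.mul_sum, Matrix.trace_sum]
      rw [Finset.sum_eq_zero]
      intro l _
      rw [mul_smul_comm, Matrix.trace_smul, h1 l, smul_zero]
    have hX0 := trace_nondeg _ hXtr
    rw [sub_eq_zero] at hX0
    exact hX0.symm
  -- multiplicativity of φ
  have hmulφ : ∀ X Y : Matrix (Fin 2) (Fin 2) R, φ (X * Y) = φ X * φ Y := by
    have hb1 : ∀ k (Y : Matrix (Fin 2) (Fin 2) R), φ (bR k * Y) = φ (bR k) * φ Y := by
      intro k
      have : φ ∘ₗ LinearMap.mulLeft R (bR k) = LinearMap.mulLeft R (φ (bR k)) ∘ₗ φ := by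
        apply Module.Basis.ext bR
        intro l
        simp only [LinearMap.comp_apply, LinearMap.mulLeft_apply]
        rw [hbR k, hbR l, ← hmulρ, key, hφb, hφb, hmulρ']
      intro Y
      have := LinearMap.ext_iff.mp this Y
      simpa only [LinearMap.comp_apply, LinearMap.mulLeft_apply] using this
    intro X Y
    have : φ ∘ₗ LinearMap.mulRight R Y = LinearMap.mulRight R (φ Y) ∘ₗ φ := by
      apply Module.Basis.ext bR
      intro k
      simp only [LinearMap.comp_apply, LinearMap.mulRight_apply]
      exact hb1 k Y
    have := LinearMap.ext_iff.mp this X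
    simpa only [LinearMap.comp_apply, LinearMap.mulRight_apply] using this
  -- φ is the identity modulo the maximal ideal
  have hres : ∀ X : Matrix (Fin 2) (Fin 2) R,
      (φ X).map (residue R) = X.map (residue R) := by
    set μ : Matrix (Fin 2) (Fin 2) R →ₗ[R] Matrix (Fin 2) (Fin 2) (ResidueField R) :=
      ((Algebra.ofId R (ResidueField R)).mapMatrix
        (m := Fin 2)).toLinearMap with hμdef
    have hμ : ∀ X : Matrix (Fin 2) (Fin 2) R, μ X = X.map (residue R) := by
      intro X
      ext i j
      simp only [hμdef, AlgHom.toLinearMap_apply, AlgHom.mapMatrix_apply, Matrix.map_apply,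
        Algebra.ofId_apply, IsLocalRing.ResidueField.algebraMap_eq]
    have hcomp : μ ∘ₗ φ = μ := by
      apply Module.Basis.ext bR
      intro k
      simp only [LinearMap.comp_apply]
      rw [hbR k, key, hμ, hμ, hlm, hlm']
    intro X
    have := LinearMap.ext_iff.mp hcomp X
    rw [LinearMap.comp_apply, hμ, hμ] at this
    exact this
  -- matrix units and the conjugating matrix
  set E : Fin 2 → Fin 2 → Matrix (Fin 2) (Fin 2) R := fun i j => Matrix.single i j 1 with hE
  set f : Fin 2 → Fin 2 → Matrix (Fin 2) (Fin 2) R := fun i j => φ (E i j) with hfdef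
  have hEmul : ∀ i j k l : Fin 2, E i j * E k l = if j = k then E i l else 0 := by
    intro i j k l
    by_cases h : j = k
    · subst h
      rw [if_pos rfl, hE]
      simpa using Matrix.single_mul_single_same (c := (1 : R)) i j l 1
    · rw [if_neg h, hE]
      exact Matrix.single_mul_single_of_ne (c := (1 : R)) i j k h 1
  have hfmul : ∀ i j k l : Fin 2, f i j * f k l = if j = k then f i l else 0 := by
    intro i j k l
    rw [hfdef]
    simp only
    rw [← hmulφ, hEmul]
    by_cases h : j = k
    · rw [if_pos h, if_pos h]
    · rw [if_neg h, if_neg h, map_zero]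
  set a : Matrix (Fin 2) (Fin 2) R := f 0 0 * E 0 0 + f 1 0 * E 0 1 with hadef
  have haE : ∀ i j : Fin 2, a * E i j = f i 0 * E 0 j := by
    intro i j
    rw [hadef, add_mul, mul_assoc, mul_assoc, hEmul, hEmul]
    fin_cases i <;> simp [Fin.ext_iff]
  have hfa : ∀ i j : Fin 2, f i j * a = f i 0 * E 0 j := by
    intro i j
    rw [hadef, mul_add, ← mul_assoc, ← mul_assoc, hfmul, hfmul]
    fin_cases j <;> simp [Fin.ext_iff]
  have hcomm : ∀ i j : Fin 2, f i j * a = a * E i j := by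
    intro i j
    rw [haE, hfa]
  -- intertwining for all matrices
  have hint : ∀ X : Matrix (Fin 2) (Fin 2) R, φ X * a = a * X := by
    have : LinearMap.mulRight R a ∘ₗ φ = LinearMap.mulLeft R a := by
      apply Module.Basis.ext (Matrix.stdBasis R (Fin 2) (Fin 2))
      rintro ⟨i, j⟩
      simp only [LinearMap.comp_apply, LinearMap.mulRight_apply, LinearMap.mulLeft_apply]
      rw [Matrix.stdBasis_eq_single]
      exact hcomm i j
    intro X
    have := LinearMap.ext_iff.mp this X
    simpa only [LinearMap.comp_apply, LinearMap.mulRight_apply, LinearMap.mulLeft_apply] using this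
  -- a reduces to the identity
  have hamap : a.map (residue R) = 1 := by
    have hfE : ∀ i j : Fin 2, (f i j).map (residue R) = (E i j).map (residue R) := by
      intro i j
      rw [hfdef]
      exact hres (E i j)
    have hEmap : ∀ i j : Fin 2,
        (E i j).map (residue R) = Matrix.single i j (1 : ResidueField R) := by
      intro i j
      ext i' j'
      simp [hE, Matrix.map_apply, Matrix.single, apply_ite (residue R)]
    have hma : a.map (residue R) = (f 0 0).map (residue R) * (E 0 0).map (residue R)
        + (f 1 0).map (residue R) * (E 0 1).map (residue R) := by
      rw [hadef, ← RingHom.mapMatrix_apply, _root_.map_add, _root_.map_mul, _root_.map_mul]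
      simp only [RingHom.mapMatrix_apply]
    rw [hma]
    simp only [hfE, hEmap]
    ext i j
    fin_cases i <;> fin_cases j <;>
      simp [Matrix.mul_apply, Matrix.single, Matrix.one_apply, Fin.sum_univ_two]
  have hadet : IsUnit a.det := by
    have h1 : residue R a.det = 1 := by
      rw [RingHom.map_det]
      have : (residue R).mapMatrix a = a.map (residue R) := RingHom.mapMatrix_apply _ _
      rw [this, hamap, Matrix.det_one]
    by_contra hun
    have hmem : a.det ∈ maximalIdeal R := by
      rw [IsLocalRing.mem_maximalIdeal]
      exact fun hU => hun hU
    have := (IsLocalRing.residue_eq_zero_iff _).mpr hmem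
    rw [h1] at this
    exact one_ne_zero this
  have haU : IsUnit a := (Matrix.isUnit_iff_isUnit_det a).mpr hadet
  refine ⟨haU.unit, ?_, ?_⟩
  · apply Units.ext
    have hcoe : ((Units.map ((residue R).mapMatrix).toMonoidHom haU.unit :
          (Matrix (Fin 2) (Fin 2) (ResidueField R))ˣ) : Matrix (Fin 2) (Fin 2) (ResidueField R))
        = ((haU.unit : Matrix (Fin 2) (Fin 2) R)).map (residue R) := rfl
    rw [hcoe, haU.unit_spec, hamap]
    rfl
  · intro h
    have hmat : (ρ' h : Matrix (Fin 2) (Fin 2) R) * a = a * (ρ h : Matrix (Fin 2) (Fin 2) R) := by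
      rw [← key h]
      exact hint _
    have hGL : ρ' h * haU.unit = haU.unit * ρ h := by
      apply Units.ext
      rw [Units.val_mul, Units.val_mul]
      have ha' : (haU.unit : Matrix (Fin 2) (Fin 2) R) = a := haU.unit_spec
      rw [ha']
      exact hmat
    rw [eq_mul_inv_iff_mul_eq]
    exact hGL
end
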